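/- Constrained Parity Halving Game bound: let n ≥ 1, let D ⊆ Fin n with |D| = d₁ and ζ : Fin n → Bool a fixed assignment on D, and let the complement of D be partitioned into d₂ parts S_1, …, S_{d₂}, each of size ≥ 2, with target parities p_1, …, p_{d₂} ∈ ZMod 2. Assume every string in the support has even Hamming weight, i.e., the Hamming weight of ζ restricted to D plus ∑_j p_j is even. Then for every family g : Fin n → (Bool → Bool), the fraction of strings x : Fin n → Bool agreeing with ζ on D and satisfying ∑_{i ∈ S_j} x_i ≡ p_j (mod 2) for all j, for which additionally (∑_i g_i(x_i)) ≡ |x|/2 (mod 2), is at most 1/2 + 2^{−(n−d₁)/2 + d₂}. -/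

import Mathlib

/-- Hamming weight of a Boolean string. -/
def hamming {n : ℕ} (x : Fin n → Bool) : ℕ :=
  (Finset.univ.filter fun i => x i = true).card

open Finset

section CPHGaux

lemma cphg_ind_parity (c : ℕ) (q : ZMod 2) :
    (if (c : ZMod 2) = q then (1:ℂ) else 0) * 2 = 1 + (-1)^(q.val) * (-1)^c := by
  have hc : ((c : ZMod 2)) = ((c % 2 : ℕ) : ZMod 2) := (ZMod.natCast_mod c 2).symm
  have hq : q = 0 ∨ q = 1 := by revert q; decide
  have h1 : (1 : ZMod 2).val = 1 := rfl
  have h0 : (0 : ZMod 2).val = 0 := rfl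
  rw [neg_one_pow_eq_pow_mod_two (n := c), hc]
  rcases Nat.mod_two_eq_zero_or_one c with h | h <;> rw [h] <;>
    rcases hq with rfl | rfl <;> simp [h1, h0] <;> norm_num

lemma cphg_sum_prod_bool {n : ℕ} (u : Fin n → Bool → ℂ) :
    ∑ x : Fin n → Bool, ∏ i, u i (x i) = ∏ i, (u i false + u i true) := by
  rw [← Fintype.piFinset_univ, ← Finset.prod_univ_sum]
  simp [add_comm]

noncomputable def wcol {n : ℕ} (D B : Finset (Fin n)) (ζ : Fin n → Bool)
    (v : Fin n → Bool → ℂ) (i : Fin n) (b : Bool) : ℂ :=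
  (if i ∈ D then (if b = ζ i then 1 else 0) else 1) *
    ((if i ∈ B then (-1:ℂ)^(b.toNat) else 1) * v i b)

lemma cphg_master {n d₂ : ℕ} (D : Finset (Fin n)) (ζ : Fin n → Bool)
    (S : Fin d₂ → Finset (Fin n)) (p : Fin d₂ → ZMod 2)
    (hdisj : ∀ j k, j ≠ k → Disjoint (S j) (S k))
    (v : Fin n → Bool → ℂ) :
    (∑ x : Fin n → Bool,
      if ((∀ i ∈ D, x i = ζ i) ∧
          ∀ j, (((S j).filter fun i => x i = true).card : ZMod 2) = p j)
      then ∏ i, v i (x i) else 0) * 2 ^ d₂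
    = ∑ E ∈ (univ : Finset (Fin d₂)).powerset,
        (∏ j ∈ E, (-1:ℂ)^((p j).val)) *
        ∏ i, (wcol D (E.biUnion S) ζ v i false + wcol D (E.biUnion S) ζ v i true) := by
  have toNat_eq : ∀ b : Bool, b.toNat = if b = true then 1 else 0 := by decide
  have step_x : ∀ x : Fin n → Bool,
      (if ((∀ i ∈ D, x i = ζ i) ∧
          ∀ j, (((S j).filter fun i => x i = true).card : ZMod 2) = p j)
        then (1:ℂ) else 0) * 2 ^ d₂
      = ∑ E ∈ (univ : Finset (Fin d₂)).powerset,
          (∏ j ∈ E, (-1:ℂ)^((p j).val)) *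
          ((∏ i ∈ D, if x i = ζ i then (1:ℂ) else 0) *
            ∏ i ∈ E.biUnion S, (-1:ℂ)^((x i).toNat)) := by
    intro x
    have hsplit : (if ((∀ i ∈ D, x i = ζ i) ∧
          ∀ j, (((S j).filter fun i => x i = true).card : ZMod 2) = p j)
        then (1:ℂ) else 0)
        = (if (∀ i ∈ D, x i = ζ i) then (1:ℂ) else 0) *
          (if (∀ j, (((S j).filter fun i => x i = true).card : ZMod 2) = p j) then (1:ℂ) else 0) := by
      by_cases hA : (∀ i ∈ D, x i = ζ i) <;>
        by_cases hB : (∀ j, (((S j).filter fun i => x i = true).card : ZMod 2) = p j) <;>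
        simp [hA, hB]
    rw [hsplit]
    have hD : (if (∀ i ∈ D, x i = ζ i) then (1:ℂ) else 0)
        = ∏ i ∈ D, if x i = ζ i then (1:ℂ) else 0 := by simp [Finset.prod_boole]
    have hB2 : (if (∀ j, (((S j).filter fun i => x i = true).card : ZMod 2) = p j)
          then (1:ℂ) else 0) * 2 ^ d₂
        = ∏ j, (1 + (-1:ℂ)^((p j).val) *
            (-1)^(((S j).filter fun i => x i = true).card)) := by
      have : (if (∀ j, (((S j).filter fun i => x i = true).card : ZMod 2) = p j)
          then (1:ℂ) else 0)
          = ∏ j, (if (((S j).filter fun i => x i = true).card : ZMod 2) = p j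
              then (1:ℂ) else 0) := by
        rw [Finset.prod_boole]; simp
      rw [this, show ((2:ℂ)^d₂) = ∏ _j : Fin d₂, (2:ℂ) by simp, ← Finset.prod_mul_distrib]
      exact Finset.prod_congr rfl fun j _ => cphg_ind_parity _ _
    calc (if (∀ i ∈ D, x i = ζ i) then (1:ℂ) else 0) *
          (if (∀ j, (((S j).filter fun i => x i = true).card : ZMod 2) = p j)
            then (1:ℂ) else 0) * 2 ^ d₂
        = (∏ i ∈ D, if x i = ζ i then (1:ℂ) else 0) *
          ∏ j, (1 + (-1:ℂ)^((p j).val) *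
            (-1)^(((S j).filter fun i => x i = true).card)) := by
          rw [mul_assoc, hB2, hD]
      _ = _ := by
          have expand : ∏ j, (1 + (-1:ℂ)^((p j).val) *
              (-1)^(((S j).filter fun i => x i = true).card))
              = ∑ E ∈ (univ : Finset (Fin d₂)).powerset,
                  (∏ j ∈ E, (-1:ℂ)^((p j).val)) *
                  ∏ i ∈ E.biUnion S, (-1:ℂ)^((x i).toNat) := by
            have : ∀ j : Fin d₂, (1 + (-1:ℂ)^((p j).val) *
                (-1)^(((S j).filter fun i => x i = true).card))
                = ((-1:ℂ)^((p j).val) * (-1)^(((S j).filter fun i => x i = true).card)) + 1 := by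
              intro j; ring
            rw [Finset.prod_congr rfl fun j _ => this j, Finset.prod_add]
            refine Finset.sum_congr rfl fun E _ => ?_
            rw [Finset.prod_const_one, mul_one, Finset.prod_mul_distrib]
            congr 1
            rw [Finset.prod_biUnion (fun j _ k _ hjk => hdisj j k hjk)]
            refine Finset.prod_congr rfl fun j _ => ?_
            rw [Finset.prod_pow_eq_pow_sum]
            congr 1
            rw [Finset.card_filter]
            exact Finset.sum_congr rfl fun i _ => (toNat_eq (x i)).symm
          rw [expand, Finset.mul_sum]
          refine Finset.sum_congr rfl fun E _ => ?_
          ring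
  have merge : ∀ (B' : Finset (Fin n)) (x : Fin n → Bool),
      (∏ i ∈ D, if x i = ζ i then (1:ℂ) else 0) *
        (∏ i ∈ B', (-1:ℂ)^((x i).toNat)) * (∏ i, v i (x i))
      = ∏ i, wcol D B' ζ v i (x i) := by
    intro B' x
    unfold wcol
    rw [Finset.prod_mul_distrib, Finset.prod_mul_distrib]
    rw [Finset.prod_ite_mem univ D fun i => if x i = ζ i then (1:ℂ) else 0,
        Finset.prod_ite_mem univ B' fun i => (-1:ℂ)^((x i).toNat),
        Finset.univ_inter, Finset.univ_inter, mul_assoc]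
  have lhs_eq : (∑ x : Fin n → Bool,
      if ((∀ i ∈ D, x i = ζ i) ∧
          ∀ j, (((S j).filter fun i => x i = true).card : ZMod 2) = p j)
      then ∏ i, v i (x i) else 0) * 2 ^ d₂
      = ∑ x : Fin n → Bool, ((if ((∀ i ∈ D, x i = ζ i) ∧
          ∀ j, (((S j).filter fun i => x i = true).card : ZMod 2) = p j)
        then (1:ℂ) else 0) * 2 ^ d₂) * ∏ i, v i (x i) := by
    rw [Finset.sum_mul]
    refine Finset.sum_congr rfl fun x _ => ?_
    by_cases h : ((∀ i ∈ D, x i = ζ i) ∧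
        ∀ j, (((S j).filter fun i => x i = true).card : ZMod 2) = p j) <;>
      simp [h] <;> ring
  rw [lhs_eq]
  have main : ∀ x : Fin n → Bool, ((if ((∀ i ∈ D, x i = ζ i) ∧
          ∀ j, (((S j).filter fun i => x i = true).card : ZMod 2) = p j)
        then (1:ℂ) else 0) * 2 ^ d₂) * ∏ i, v i (x i)
      = ∑ E ∈ (univ : Finset (Fin d₂)).powerset,
          (∏ j ∈ E, (-1:ℂ)^((p j).val)) * ∏ i, wcol D (E.biUnion S) ζ v i (x i) := by
    intro x
    rw [step_x x, Finset.sum_mul]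
    refine Finset.sum_congr rfl fun E _ => ?_
    rw [mul_assoc, ← merge (E.biUnion S) x]
    try ring
  rw [Finset.sum_congr rfl fun x _ => main x, Finset.sum_comm]
  refine Finset.sum_congr rfl fun E _ => ?_
  rw [← Finset.mul_sum, cphg_sum_prod_bool]

lemma cphg_norm_pm (ε δ : ℂ) (hε : ε = 1 ∨ ε = -1) (hδ : δ = 1 ∨ δ = -1) :
    ‖ε + δ * Complex.I‖ = Real.sqrt 2 := by
  rcases hε with rfl | rfl <;> rcases hδ with rfl | rfl <;>
    · rw [Complex.norm_def, Complex.normSq_apply]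
      simp
      norm_num

end CPHGaux

/-- Constrained Parity Halving Game bound: `d₁ = D.card` players' inputs are fixed to `ζ`,
the remaining players are partitioned into `d₂` groups `S j` (each of size ≥ 2) with
prescribed input parities `p j`, and the total parity of the support is even.  Then any
family of one-bit strategies wins on the uniform distribution over the constrained inputs
with probability at most `1/2 + 2^{−(n−d₁)/2 + d₂}`. -/
theorem constrained_parity_halving_game_bound (n d₂ : ℕ) (hn : 1 ≤ n)
    (D : Finset (Fin n)) (ζ : Fin n → Bool)
    (S : Fin d₂ → Finset (Fin n)) (p : Fin d₂ → ZMod 2)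
    (hdisj : ∀ j k, j ≠ k → Disjoint (S j) (S k))
    (hunion : Finset.univ.biUnion S = Dᶜ)
    (hsize : ∀ j, 2 ≤ (S j).card)
    (heven : (((D.filter fun i => ζ i = true).card : ZMod 2) + ∑ j, p j) = 0)
    (g : Fin n → Bool → Bool) :
    ((Finset.univ.filter fun x : Fin n → Bool =>
        ((∀ i ∈ D, x i = ζ i) ∧
          ∀ j, (((S j).filter fun i => x i = true).card : ZMod 2) = p j) ∧
        (Finset.univ.filter fun i => g i (x i) = true).card % 2 = (hamming x / 2) % 2).card : ℝ) /
      ((Finset.univ.filter fun x : Fin n → Bool =>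
        (∀ i ∈ D, x i = ζ i) ∧
          ∀ j, (((S j).filter fun i => x i = true).card : ZMod 2) = p j).card : ℝ)
      ≤ 1 / 2 + (2 : ℝ) ^ (-(((n : ℝ) - (D.card : ℝ)) / 2) + (d₂ : ℝ)) := by
  classical
  set K := Dᶜ.card with hKdef
  -- step 1: cardinality of the support
  have count : (((Finset.univ.filter fun x : Fin n → Bool =>
        (∀ i ∈ D, x i = ζ i) ∧
          ∀ j, (((S j).filter fun i => x i = true).card : ZMod 2) = p j).card : ℂ)) * 2 ^ d₂
      = 2 ^ K := by
    have hm := cphg_master D ζ S p hdisj (fun _ _ => (1:ℂ))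
    have hl : (∑ x : Fin n → Bool,
        if ((∀ i ∈ D, x i = ζ i) ∧
            ∀ j, (((S j).filter fun i => x i = true).card : ZMod 2) = p j)
        then ∏ _i : Fin n, (1:ℂ) else 0)
        = ((Finset.univ.filter fun x : Fin n → Bool =>
            (∀ i ∈ D, x i = ζ i) ∧
              ∀ j, (((S j).filter fun i => x i = true).card : ZMod 2) = p j).card : ℂ) := by
      simp [Finset.sum_boole]
    rw [hl] at hm
    rw [hm]
    rw [Finset.sum_eq_single_of_mem (∅ : Finset (Fin d₂)) (Finset.empty_mem_powerset _)]
    · simp only [Finset.prod_empty, one_mul]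
      have hthis : ∀ i : Fin n,
          (wcol D ((∅ : Finset (Fin d₂)).biUnion S) ζ (fun _ _ => (1:ℂ)) i false +
            wcol D ((∅ : Finset (Fin d₂)).biUnion S) ζ (fun _ _ => (1:ℂ)) i true)
          = if i ∈ Dᶜ then (2:ℂ) else 1 := by
        intro i
        by_cases hiD : i ∈ D
        · have h1 : i ∉ Dᶜ := by simp [hiD]
          cases h : ζ i <;> simp [wcol, hiD, h, h1]
        · have h1 : i ∈ Dᶜ := by simp [hiD]
          simp [wcol, hiD, h1]
          norm_num
      rw [Finset.prod_congr rfl fun i _ => hthis i, Finset.prod_ite_mem,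
        Finset.univ_inter, Finset.prod_const]
    · intro E _ hE
      obtain ⟨j, hj⟩ := Finset.nonempty_iff_ne_empty.2 hE
      obtain ⟨i₀, hi₀⟩ := Finset.card_pos.1 (lt_of_lt_of_le (by norm_num) (hsize j))
      have hi₀B : i₀ ∈ E.biUnion S := Finset.mem_biUnion.2 ⟨j, hj, hi₀⟩
      have hi₀D : i₀ ∉ D := by
        have : i₀ ∈ Dᶜ := hunion ▸ (Finset.subset_biUnion_of_mem S (Finset.mem_univ j)) hi₀
        exact Finset.mem_compl.1 this
      have hz : (wcol D (E.biUnion S) ζ (fun _ _ => (1:ℂ)) i₀ false +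
          wcol D (E.biUnion S) ζ (fun _ _ => (1:ℂ)) i₀ true) = 0 := by
        simp [wcol, hi₀D, hi₀B]
      rw [Finset.prod_eq_zero (Finset.mem_univ i₀) hz, mul_zero]
  -- step 2: the exponential-sum bound
  set w : Fin n → Bool → ℂ := fun i b =>
      (if g i b = true then (-1:ℂ) else 1) * (if b = true then Complex.I else 1) with hw
  have prod_w : ∀ x : Fin n → Bool, ∏ i, w i (x i)
      = (-1:ℂ) ^ ((Finset.univ.filter fun i => g i (x i) = true).card) *
        Complex.I ^ (hamming x) := by
    intro x
    rw [hw]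
    simp only []
    rw [Finset.prod_mul_distrib]
    congr 1
    · rw [Finset.prod_ite (fun _ => (-1:ℂ)) (fun _ => (1:ℂ)), Finset.prod_const,
        Finset.prod_const_one, mul_one]
    · rw [Finset.prod_ite (fun _ => Complex.I) (fun _ => (1:ℂ)), Finset.prod_const,
        Finset.prod_const_one, mul_one]
      rfl
  have expsum : ‖∑ x : Fin n → Bool,
      if ((∀ i ∈ D, x i = ζ i) ∧
          ∀ j, (((S j).filter fun i => x i = true).card : ZMod 2) = p j)
      then (-1:ℂ) ^ ((Finset.univ.filter fun i => g i (x i) = true).card) *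
        Complex.I ^ (hamming x) else 0‖ ≤ Real.sqrt 2 ^ K := by
    have hm := cphg_master D ζ S p hdisj w
    have hrw : (∑ x : Fin n → Bool,
        if ((∀ i ∈ D, x i = ζ i) ∧
            ∀ j, (((S j).filter fun i => x i = true).card : ZMod 2) = p j)
        then ∏ i, w i (x i) else 0)
        = ∑ x : Fin n → Bool,
        if ((∀ i ∈ D, x i = ζ i) ∧
            ∀ j, (((S j).filter fun i => x i = true).card : ZMod 2) = p j)
        then (-1:ℂ) ^ ((Finset.univ.filter fun i => g i (x i) = true).card) *
          Complex.I ^ (hamming x) else 0 := by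
      refine Finset.sum_congr rfl fun x _ => ?_
      rw [prod_w x]
    rw [hrw] at hm
    have hbound : ∀ E ∈ (univ : Finset (Fin d₂)).powerset,
        ‖(∏ j ∈ E, (-1:ℂ)^((p j).val)) *
          ∏ i, (wcol D (E.biUnion S) ζ w i false + wcol D (E.biUnion S) ζ w i true)‖
        ≤ Real.sqrt 2 ^ K := by
      intro E _
      set B := E.biUnion S with hB
      have hBsub : B ⊆ Dᶜ := by
        rw [hB, ← hunion]
        exact Finset.biUnion_subset_biUnion_of_subset_left S (Finset.subset_univ E)
      rw [norm_mul]
      have hχ : ‖∏ j ∈ E, (-1:ℂ)^((p j).val)‖ = 1 := by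
        rw [norm_prod]
        refine Finset.prod_eq_one fun j _ => ?_
        rw [norm_pow, norm_neg, norm_one, one_pow]
      rw [hχ, one_mul, norm_prod]
      have hcol : ∀ i : Fin n,
          ‖wcol D B ζ w i false + wcol D B ζ w i true‖
            ≤ if i ∈ Dᶜ then Real.sqrt 2 else 1 := by
        intro i
        by_cases hiD : i ∈ D
        · have hiB : i ∉ B := fun h => (Finset.mem_compl.1 (hBsub h)) hiD
          have : wcol D B ζ w i false + wcol D B ζ w i true = w i (ζ i) := by
            cases h : ζ i <;> simp [wcol, hiD, hiB, h]
          rw [this]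
          have : ‖w i (ζ i)‖ = 1 := by
            rw [hw]
            by_cases h1 : g i (ζ i) = true <;> cases h2 : ζ i <;>
              simp_all [norm_mul, Complex.norm_I]
          simp [Finset.mem_compl, hiD, this]
        · have hsum : wcol D B ζ w i false + wcol D B ζ w i true
              = (if g i false = true then (-1:ℂ) else 1) +
                (((if i ∈ B then (-1:ℂ) else 1) *
                  (if g i true = true then (-1:ℂ) else 1)) * Complex.I) := by
            by_cases hb : i ∈ B <;> by_cases h0 : g i false = true <;>
              by_cases h1 : g i true = true <;>
              simp [wcol, hw, hiD, hb, h0, h1] <;> ring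
          rw [hsum, cphg_norm_pm]
          · simp [Finset.mem_compl, hiD]
          · by_cases h0 : g i false = true <;> simp [h0]
          · by_cases hb : i ∈ B <;> by_cases h1 : g i true = true <;> simp [hb, h1]
      calc ∏ i, ‖wcol D B ζ w i false + wcol D B ζ w i true‖
          ≤ ∏ i, (if i ∈ Dᶜ then Real.sqrt 2 else 1) := by
            refine Finset.prod_le_prod (fun i _ => norm_nonneg _) fun i _ => hcol i
        _ = Real.sqrt 2 ^ K := by
            rw [Finset.prod_ite_mem, Finset.univ_inter, Finset.prod_const]
    have h2 : ‖∑ x : Fin n → Bool,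
        if ((∀ i ∈ D, x i = ζ i) ∧
            ∀ j, (((S j).filter fun i => x i = true).card : ZMod 2) = p j)
        then (-1:ℂ) ^ ((Finset.univ.filter fun i => g i (x i) = true).card) *
          Complex.I ^ (hamming x) else 0‖ * 2 ^ d₂ ≤ Real.sqrt 2 ^ K * 2 ^ d₂ := by
      have : ‖(∑ x : Fin n → Bool,
          if ((∀ i ∈ D, x i = ζ i) ∧
              ∀ j, (((S j).filter fun i => x i = true).card : ZMod 2) = p j)
          then (-1:ℂ) ^ ((Finset.univ.filter fun i => g i (x i) = true).card) *
            Complex.I ^ (hamming x) else 0) * 2 ^ d₂‖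
          ≤ Real.sqrt 2 ^ K * 2 ^ d₂ := by
        rw [hm]
        calc ‖∑ E ∈ (univ : Finset (Fin d₂)).powerset, (∏ j ∈ E, (-1:ℂ)^((p j).val)) *
              ∏ i, (wcol D (E.biUnion S) ζ w i false + wcol D (E.biUnion S) ζ w i true)‖
            ≤ ∑ E ∈ (univ : Finset (Fin d₂)).powerset, ‖(∏ j ∈ E, (-1:ℂ)^((p j).val)) *
              ∏ i, (wcol D (E.biUnion S) ζ w i false + wcol D (E.biUnion S) ζ w i true)‖ :=
              norm_sum_le _ _
          _ ≤ ∑ _E ∈ (univ : Finset (Fin d₂)).powerset, Real.sqrt 2 ^ K :=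
              Finset.sum_le_sum hbound
          _ = Real.sqrt 2 ^ K * 2 ^ d₂ := by
              rw [Finset.sum_const, Finset.card_powerset, Finset.card_univ, Fintype.card_fin]
              simp [nsmul_eq_mul]; ring
      calc ‖∑ x : Fin n → Bool,
          if ((∀ i ∈ D, x i = ζ i) ∧
              ∀ j, (((S j).filter fun i => x i = true).card : ZMod 2) = p j)
          then (-1:ℂ) ^ ((Finset.univ.filter fun i => g i (x i) = true).card) *
            Complex.I ^ (hamming x) else 0‖ * 2 ^ d₂
          = ‖(∑ x : Fin n → Bool,
            if ((∀ i ∈ D, x i = ζ i) ∧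
                ∀ j, (((S j).filter fun i => x i = true).card : ZMod 2) = p j)
            then (-1:ℂ) ^ ((Finset.univ.filter fun i => g i (x i) = true).card) *
              Complex.I ^ (hamming x) else 0) * 2 ^ d₂‖ := by
            rw [norm_mul]
            norm_num
        _ ≤ Real.sqrt 2 ^ K * 2 ^ d₂ := this
    have hpow : (0:ℝ) < 2 ^ d₂ := by positivity
    exact le_of_mul_le_mul_right h2 hpow
  -- step 3: evenness of the Hamming weight on the support
  have ham_even : ∀ x : Fin n → Bool,
      ((∀ i ∈ D, x i = ζ i) ∧
        ∀ j, (((S j).filter fun i => x i = true).card : ZMod 2) = p j) →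
      2 ∣ hamming x := by
    intro x hx
    have hsplit : hamming x = ((D.filter fun i => x i = true).card) +
        ∑ j, ((S j).filter fun i => x i = true).card := by
      unfold hamming
      rw [← Finset.union_compl D, Finset.filter_union, Finset.card_union_of_disjoint
        (disjoint_compl_right.mono (Finset.filter_subset _ _) (Finset.filter_subset _ _)),
        ← hunion, Finset.filter_biUnion, Finset.card_biUnion
        (fun j _ k _ hjk => (hdisj j k hjk).mono
          (Finset.filter_subset _ _) (Finset.filter_subset _ _))]
    have hcast : ((hamming x : ZMod 2)) = 0 := by
      rw [hsplit]
      push_cast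
      have hDpart : ((D.filter fun i => x i = true).card : ZMod 2)
          = ((D.filter fun i => ζ i = true).card : ZMod 2) := by
        rw [Finset.filter_congr fun i hi => by rw [hx.1 i hi]]
      rw [hDpart, Finset.sum_congr rfl fun j _ => hx.2 j]
      exact heven
    exact (ZMod.natCast_eq_zero_iff _ 2).1 hcast
  -- step 4: turn the exponential sum into a statement about the winning count
  set Cond : (Fin n → Bool) → Prop := fun x =>
    (∀ i ∈ D, x i = ζ i) ∧
      ∀ j, (((S j).filter fun i => x i = true).card : ZMod 2) = p j with hCond
  set win : (Fin n → Bool) → Prop := fun x =>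
    (Finset.univ.filter fun i => g i (x i) = true).card % 2 = (hamming x / 2) % 2 with hwin
  set T : Finset (Fin n → Bool) := Finset.univ.filter Cond with hT
  have hF : ∀ x ∈ T, ((-1:ℂ) ^ ((Finset.univ.filter fun i => g i (x i) = true).card) *
      Complex.I ^ (hamming x)) = if win x then 1 else -1 := by
    intro x hxT
    have hx : Cond x := (Finset.mem_filter.1 hxT).2
    obtain ⟨m, hm⟩ := ham_even x hx
    have hI : Complex.I ^ (hamming x) = (-1:ℂ) ^ m := by
      rw [hm, pow_mul, Complex.I_sq]
    have hm2 : hamming x / 2 = m := by omega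
    rw [hI, ← pow_add]
    by_cases hwx : win x
    · have hc : (Finset.univ.filter fun i => g i (x i) = true).card % 2
          = (hamming x / 2) % 2 := hwx
      rw [hm2] at hc
      have hev : Even ((Finset.univ.filter fun i => g i (x i) = true).card + m) := by
        rw [Nat.even_add, Nat.even_iff, Nat.even_iff]
        omega
      rw [hev.neg_one_pow, if_pos hwx]
    · have hc : ¬ ((Finset.univ.filter fun i => g i (x i) = true).card % 2
          = (hamming x / 2) % 2) := hwx
      rw [hm2] at hc
      have hodd : Odd ((Finset.univ.filter fun i => g i (x i) = true).card + m) := by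
        rw [Nat.odd_iff]
        omega
      rw [hodd.neg_one_pow, if_neg hwx]
  have key : (∑ x : Fin n → Bool,
      if Cond x
      then (-1:ℂ) ^ ((Finset.univ.filter fun i => g i (x i) = true).card) *
        Complex.I ^ (hamming x) else 0)
      = ((T.filter win).card : ℂ) - ((T.filter fun x => ¬ win x).card : ℂ) := by
    rw [← Finset.sum_filter, ← hT, ← Finset.sum_filter_add_sum_filter_not T win]
    have h1 : ∑ x ∈ T.filter win,
        ((-1:ℂ) ^ ((Finset.univ.filter fun i => g i (x i) = true).card) *
          Complex.I ^ (hamming x)) = ((T.filter win).card : ℂ) := by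
      calc ∑ x ∈ T.filter win,
            ((-1:ℂ) ^ ((Finset.univ.filter fun i => g i (x i) = true).card) *
              Complex.I ^ (hamming x))
          = ∑ _x ∈ T.filter win, (1:ℂ) := by
            refine Finset.sum_congr rfl fun x hx => ?_
            rw [hF x (Finset.filter_subset _ _ hx), if_pos (Finset.mem_filter.1 hx).2]
        _ = ((T.filter win).card : ℂ) := by simp
    have h2 : ∑ x ∈ T.filter (fun x => ¬ win x),
        ((-1:ℂ) ^ ((Finset.univ.filter fun i => g i (x i) = true).card) *
          Complex.I ^ (hamming x)) = -((T.filter fun x => ¬ win x).card : ℂ) := by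
      calc ∑ x ∈ T.filter (fun x => ¬ win x),
            ((-1:ℂ) ^ ((Finset.univ.filter fun i => g i (x i) = true).card) *
              Complex.I ^ (hamming x))
          = ∑ _x ∈ T.filter (fun x => ¬ win x), (-1:ℂ) := by
            refine Finset.sum_congr rfl fun x hx => ?_
            rw [hF x (Finset.filter_subset _ _ hx), if_neg (Finset.mem_filter.1 hx).2]
        _ = -((T.filter fun x => ¬ win x).card : ℂ) := by simp
    rw [h1, h2]
    ring
  -- real quantities
  have hab : ((T.filter win).card : ℝ) + ((T.filter fun x => ¬ win x).card : ℝ)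
      = (T.card : ℝ) := by
    norm_cast
    exact Finset.card_filter_add_card_filter_not _
  have habs : |((T.filter win).card : ℝ) - ((T.filter fun x => ¬ win x).card : ℝ)|
      ≤ Real.sqrt 2 ^ K := by
    have h := expsum
    rw [key] at h
    have hcast : ((T.filter win).card : ℂ) - ((T.filter fun x => ¬ win x).card : ℂ)
        = ((((T.filter win).card : ℝ) - ((T.filter fun x => ¬ win x).card : ℝ) : ℝ) : ℂ) := by
      push_cast
      ring
    rw [hcast] at h
    rwa [Complex.norm_real] at h
  have hTcount : (T.card : ℝ) * 2 ^ d₂ = 2 ^ K := by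
    have h := count
    have h2 : ((((T.card : ℝ)) * 2 ^ d₂ : ℝ) : ℂ) = (((2:ℝ) ^ K : ℝ) : ℂ) := by
      push_cast
      exact_mod_cast h
    exact Complex.ofReal_inj.1 h2
  have hTpos : (0:ℝ) < (T.card : ℝ) := by
    have h2K : (0:ℝ) < 2 ^ K := by positivity
    have h2d : (0:ℝ) < 2 ^ d₂ := by positivity
    nlinarith
  -- step 5: rpow algebra
  have hcardle : D.card ≤ n := by simpa using Finset.card_le_univ D
  have hKn : K = n - D.card := by
    rw [hKdef, Finset.card_compl, Fintype.card_fin]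
  have hKval : (K : ℝ) = (n : ℝ) - (D.card : ℝ) := by
    rw [hKn, Nat.cast_sub hcardle]
  set R : ℝ := (2:ℝ) ^ (-(((n : ℝ) - (D.card : ℝ)) / 2) + (d₂ : ℝ)) with hR
  have hRpos : 0 < R := Real.rpow_pos_of_pos (by norm_num) _
  have hBval : Real.sqrt 2 ^ K = (2:ℝ) ^ ((K : ℝ) / 2) := by
    rw [Real.sqrt_eq_rpow, ← Real.rpow_natCast ((2:ℝ) ^ ((1:ℝ)/2)) K,
      ← Real.rpow_mul (by norm_num : (0:ℝ) ≤ 2)]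
    congr 1
    ring
  have hBR : Real.sqrt 2 ^ K * 2 ^ d₂ = R * 2 ^ K := by
    rw [hBval, hR, ← hKval]
    rw [show ((2:ℝ) ^ d₂) = (2:ℝ) ^ ((d₂ : ℕ) : ℝ) from (Real.rpow_natCast 2 d₂).symm,
      show ((2:ℝ) ^ K) = (2:ℝ) ^ ((K : ℕ) : ℝ) from (Real.rpow_natCast 2 K).symm,
      ← Real.rpow_add (by norm_num : (0:ℝ) < 2), ← Real.rpow_add (by norm_num : (0:ℝ) < 2)]
    congr 1
    ring
  have hBeq : Real.sqrt 2 ^ K = R * (T.card : ℝ) := by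
    have h2d : (0:ℝ) < 2 ^ d₂ := by positivity
    have heq : Real.sqrt 2 ^ K * 2 ^ d₂ = R * (T.card : ℝ) * 2 ^ d₂ := by
      rw [hBR, ← hTcount]
      ring
    exact mul_right_cancel₀ (ne_of_gt h2d) heq
  -- step 6: conclude
  have hWnum : (Finset.univ.filter fun x : Fin n → Bool =>
      ((∀ i ∈ D, x i = ζ i) ∧
        ∀ j, (((S j).filter fun i => x i = true).card : ZMod 2) = p j) ∧
      (Finset.univ.filter fun i => g i (x i) = true).card % 2 = (hamming x / 2) % 2)
      = T.filter win := by
    rw [hT, Finset.filter_filter]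
  rw [hWnum]
  rw [div_le_iff₀ hTpos]
  have h1 : ((T.filter win).card : ℝ) - ((T.filter fun x => ¬ win x).card : ℝ)
      ≤ R * (T.card : ℝ) := by
    calc ((T.filter win).card : ℝ) - ((T.filter fun x => ¬ win x).card : ℝ)
        ≤ |((T.filter win).card : ℝ) - ((T.filter fun x => ¬ win x).card : ℝ)| := le_abs_self _
      _ ≤ Real.sqrt 2 ^ K := habs
      _ = R * (T.card : ℝ) := hBeq
  nlinarith [hRpos, hTpos, hab, h1]
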